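/- Let G be a crystallographic group with translation subgroup T, acting properly and cocompactly on a CAT(0) cube complex X, and let η: X → ℝ^n be a G-equivariant (λ,μ)-quasi-isometry. Then every translation t ∈ T fixes the simplicial boundary of X pointwise; more precisely, for every combinatorial geodesic ray γ, the symmetric difference W(γ) △ W(tγ) is finite. -/

import Mathlib

/-- `γ : ℕ → V` is a combinatorial geodesic ray in `Γ`. -/
def IsGeodesicRay {V : Type*} (Γ : SimpleGraph V) (γ : ℕ → V) : Prop :=
  (∀ t : ℕ, Γ.Adj (γ t) (γ (t + 1))) ∧ ∀ s t : ℕ, s ≤ t → Γ.dist (γ s) (γ t) = t - s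

/-- The set of hyperplanes crossed by the ray `γ`. -/
def raysWalls {V W : Type*} (side : W → V → Bool) (γ : ℕ → V) : Set W :=
  {w | ∃ t : ℕ, side w (γ t) ≠ side w (γ (t + 1))}

section Aux

variable {V W : Type*} {Γ : SimpleGraph V} {side : W → V → Bool}

lemma exists_flip (γ : ℕ → V) (w : W) (s t : ℕ) (hst : s ≤ t)
    (hne : side w (γ s) ≠ side w (γ t)) :
    ∃ u, s ≤ u ∧ u < t ∧ side w (γ u) ≠ side w (γ (u + 1)) := by
  induction t with
  | zero =>
    obtain rfl := Nat.le_zero.mp hst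
    exact absurd rfl hne
  | succ t ih =>
    rcases Nat.lt_or_ge s (t+1) with hs | hs
    · have hs' : s ≤ t := by omega
      by_cases h : side w (γ t) = side w (γ (t+1))
      · obtain ⟨u, h1, h2, h3⟩ := ih hs' (fun he => hne (he.trans h))
        exact ⟨u, h1, by omega, h3⟩
      · exact ⟨t, hs', by omega, h⟩
    · have : s = t + 1 := by omega
      subst this
      exact absurd rfl hne

lemma side_eq_of_no_flip (γ : ℕ → V) (w : W) (s t : ℕ) (hst : s ≤ t)
    (h : ∀ u, s ≤ u → u < t → side w (γ u) = side w (γ (u + 1))) :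
    side w (γ s) = side w (γ t) := by
  by_contra hne
  obtain ⟨u, h1, h2, h3⟩ := exists_flip γ w s t hst hne
  exact h3 (h u h1 h2)

lemma flip_unique
    (hdist : ∀ u v : V, Γ.dist u v = {w : W | side w u ≠ side w v}.ncard)
    (hfin : ∀ u v : V, {w : W | side w u ≠ side w v}.Finite)
    (γ : ℕ → V) (hγ : IsGeodesicRay Γ γ) (w : W) (u u' : ℕ)
    (h : side w (γ u) ≠ side w (γ (u + 1)))
    (h' : side w (γ u') ≠ side w (γ (u' + 1))) :
    u = u' := by
  -- reduce to the case u < u'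
  have aux : ∀ a b : ℕ, a < b →
      side w (γ a) ≠ side w (γ (a + 1)) →
      side w (γ b) ≠ side w (γ (b + 1)) → False := by
    intro a b hab ha hb
    have hsing : ∀ k : ℕ, ∃ x : W,
        {x : W | side x (γ k) ≠ side x (γ (k + 1))} = {x} := by
      intro k
      apply Set.ncard_eq_one.mp
      have hd := hγ.2 k (k+1) (Nat.le_succ k)
      rw [hdist] at hd
      omega
    choose f hf using hsing
    have hwa : w = f a := by
      have hw : w ∈ {x : W | side x (γ a) ≠ side x (γ (a + 1))} := ha
      rw [hf a, Set.mem_singleton_iff] at hw; exact hw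
    have hwb : w = f b := by
      have hw : w ∈ {x : W | side x (γ b) ≠ side x (γ (b + 1))} := hb
      rw [hf b, Set.mem_singleton_iff] at hw; exact hw
    have hsub : {x : W | side x (γ a) ≠ side x (γ (b + 1))} ⊆
        f '' Set.Ico a b := by
      intro x hx
      obtain ⟨k, hk1, hk2, hk3⟩ := exists_flip γ x a (b+1) (by omega) hx
      have hxk : x = f k := by
        have hm : x ∈ {y : W | side y (γ k) ≠ side y (γ (k + 1))} := hk3
        rw [hf k, Set.mem_singleton_iff] at hm; exact hm
      by_cases hk : k = b
      · exact ⟨a, ⟨le_refl a, hab⟩, by rw [← hwa, hwb, ← hk, ← hxk]⟩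
      · exact ⟨k, ⟨hk1, by omega⟩, hxk.symm⟩
    have hcard : {x : W | side x (γ a) ≠ side x (γ (b + 1))}.ncard = b + 1 - a := by
      rw [← hdist]; exact hγ.2 a (b+1) (by omega)
    have h1 : {x : W | side x (γ a) ≠ side x (γ (b + 1))}.ncard ≤
        (f '' Set.Ico a b).ncard :=
      Set.ncard_le_ncard hsub ((Set.finite_Ico a b).image f)
    have h2 : (f '' Set.Ico a b).ncard ≤ (Set.Ico a b).ncard :=
      Set.ncard_image_le (Set.finite_Ico a b)
    have h3 : (Set.Ico a b).ncard = b - a := by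
      rw [show Set.Ico a b = ↑(Finset.Ico a b) by simp,
        Set.ncard_coe_finset, Nat.card_Ico]
    omega
  rcases lt_trichotomy u u' with hlt | heq | hgt
  · exact absurd (aux u u' hlt h h') not_false
  · exact heq
  · exact absurd (aux u' u hgt h' h) not_false

lemma diff_finite
    (hdist : ∀ u v : V, Γ.dist u v = {w : W | side w u ≠ side w v}.ncard)
    (hfin : ∀ u v : V, {w : W | side w u ≠ side w v}.Finite)
    (γ δ : ℕ → V) (hγ : IsGeodesicRay Γ γ) (D : ℕ)
    (hD : ∀ s : ℕ, ({w : W | side w (γ s) ≠ side w (δ s)}).ncard ≤ D) :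
    (raysWalls side γ \ raysWalls side δ).Finite := by
  by_contra hinf
  replace hinf : (raysWalls side γ \ raysWalls side δ).Infinite := hinf
  obtain ⟨F, hFsub, hFfin, hFcard⟩ := hinf.exists_subset_ncard_eq (2 * D + 1)
  have hex : ∀ x ∈ F, ∃ u, side x (γ u) ≠ side x (γ (u + 1)) :=
    fun x hx => (hFsub hx).1
  choose! g hg using hex
  set s : ℕ := hFfin.toFinset.sup g + 1 with hs
  have key : F ⊆ {w : W | side w (γ 0) ≠ side w (δ 0)} ∪
      {w : W | side w (γ s) ≠ side w (δ s)} := by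
    intro x hx
    have hδ : ∀ k : ℕ, side x (δ k) = side x (δ 0) := by
      intro k
      by_contra hne
      obtain ⟨u, _, _, hu⟩ := exists_flip δ x 0 k (Nat.zero_le k) (Ne.symm hne)
      exact (hFsub hx).2 ⟨u, hu⟩
    have ht0 := hg x hx
    have ht0s : g x < s := by
      have := Finset.le_sup (hFfin.mem_toFinset.mpr hx) (f := g)
      omega
    have hbefore : side x (γ 0) = side x (γ (g x)) := by
      apply side_eq_of_no_flip γ x 0 (g x) (Nat.zero_le _)
      intro u _ hu
      by_contra hflip
      have := flip_unique hdist hfin γ hγ x u (g x) hflip ht0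
      omega
    have hafter : side x (γ (g x + 1)) = side x (γ s) := by
      apply side_eq_of_no_flip γ x (g x + 1) s (by omega)
      intro u hu _
      by_contra hflip
      have := flip_unique hdist hfin γ hγ x u (g x) hflip ht0
      omega
    by_cases hcase : side x (δ 0) = side x (γ 0)
    · right
      show side x (γ s) ≠ side x (δ s)
      rw [hδ s, hcase, hbefore, ← hafter]
      exact fun he => ht0 he.symm
    · left
      exact fun he => hcase he.symm
  have hle : F.ncard ≤ 2 * D := by
    have h1 : F.ncard ≤ ({w : W | side w (γ 0) ≠ side w (δ 0)} ∪
        {w : W | side w (γ s) ≠ side w (δ s)}).ncard :=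
      Set.ncard_le_ncard key ((hfin _ _).union (hfin _ _))
    have h2 := Set.ncard_union_le {w : W | side w (γ 0) ≠ side w (δ 0)}
      {w : W | side w (γ s) ≠ side w (δ s)}
    have h3 := hD 0
    have h4 := hD s
    omega
  omega

end Aux
lemma dist_smul_eq' {V W : Type*} {Γ : SimpleGraph V} {side : W → V → Bool}
    (hdist : ∀ u v : V, Γ.dist u v = {w : W | side w u ≠ side w v}.ncard)
    {G : Type*} [Group G] [MulAction G V] [MulAction G W]
    (hside : ∀ (g : G) (w : W) (v : V), side (g • w) (g • v) = side w v)
    (g : G) (u v : V) : Γ.dist (g • u) (g • v) = Γ.dist u v := by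
  have hkey : ∀ (w : W) (x : V), side w (g • x) = side (g⁻¹ • w) x := by
    intro w x
    have := hside g (g⁻¹ • w) x
    rwa [smul_inv_smul] at this
  have hset : {w : W | side w (g • u) ≠ side w (g • v)} =
      (fun w : W => g • w) '' {w : W | side w u ≠ side w v} := by
    ext w
    simp only [Set.mem_image, Set.mem_setOf_eq]
    constructor
    · intro h
      rw [hkey w u, hkey w v] at h
      exact ⟨g⁻¹ • w, h, smul_inv_smul g w⟩
    · rintro ⟨x, hx, rfl⟩
      rw [hkey _ u, hkey _ v, inv_smul_smul]
      exact hx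
  rw [hdist, hdist, hset,
    Set.ncard_image_of_injective _ (MulAction.injective g)]


/-- let `G` be a crystallographic group with translation subgroup
`T`, acting properly and cocompactly by automorphisms on a CAT(0) cube complex
(modeled by its 1-skeleton `Γ` with hyperplane structure `side`), and let
`η : X → ℝⁿ` be a `G`-equivariant `(λ,μ)`-quasi-isometry.  Then every
translation `t ∈ T` fixes the simplicial boundary pointwise: for every
combinatorial geodesic ray `γ`, the symmetric difference `W(γ) ∆ W(tγ)` is
finite, i.e. `[γ] = t[γ]`. -/
theorem translations_fix_simplicial_boundary
    {V W : Type*} (Γ : SimpleGraph V) (hconn : Γ.Connected)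
    (side : W → V → Bool)
    (hfin : ∀ u v : V, {w : W | side w u ≠ side w v}.Finite)
    (hdist : ∀ u v : V, Γ.dist u v = {w : W | side w u ≠ side w v}.ncard)
    (G : Type*) [Group G] [MulAction G V] [MulAction G W]
    (hadj : ∀ (g : G) (u v : V), Γ.Adj u v → Γ.Adj (g • u) (g • v))
    (hside : ∀ (g : G) (w : W) (v : V), side (g • w) (g • v) = side w v)
    (hproper : ∀ (v : V) (R : ℕ), {g : G | Γ.dist v (g • v) ≤ R}.Finite)
    (hcocompact : ∃ R : ℕ, ∀ u v : V, ∃ g : G, Γ.dist u (g • v) ≤ R)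
    (n : ℕ) [MulAction G (EuclideanSpace ℝ (Fin n))]
    (hisom : ∀ (g : G) (x y : EuclideanSpace ℝ (Fin n)),
      dist (g • x) (g • y) = dist x y)
    (T : Subgroup G) [T.Normal] [T.FiniteIndex]
    (htrans : ∀ t ∈ T, ∃ c : EuclideanSpace ℝ (Fin n),
      ∀ x : EuclideanSpace ℝ (Fin n), t • x = x + c)
    (lam mu : ℝ) (hlam : 1 ≤ lam) (hmu : 0 ≤ mu)
    (η : V → EuclideanSpace ℝ (Fin n))
    (hequiv : ∀ (g : G) (v : V), η (g • v) = g • η v)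
    (hηlower : ∀ u v : V, (1 / lam) * (Γ.dist u v : ℝ) - mu ≤ dist (η u) (η v))
    (hηupper : ∀ u v : V, dist (η u) (η v) ≤ lam * (Γ.dist u v : ℝ) + mu)
    (hηsurj : ∃ κ : ℝ, ∀ x : EuclideanSpace ℝ (Fin n), ∃ v : V, dist x (η v) ≤ κ) :
    ∀ t ∈ T, ∀ γ : ℕ → V, IsGeodesicRay Γ γ →
      (symmDiff (raysWalls side γ) (raysWalls side (fun s => t • γ s))).Finite := by
  intro t ht γ hγ
  obtain ⟨c, hc⟩ := htrans t ht
  set δ : ℕ → V := fun s => t • γ s with hδdef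
  have hδ : IsGeodesicRay Γ δ := by
    constructor
    · intro k; exact hadj t _ _ (hγ.1 k)
    · intro a b hab
      rw [show δ a = t • γ a from rfl, show δ b = t • γ b from rfl,
        dist_smul_eq' hdist hside]
      exact hγ.2 a b hab
  have hlam0 : (0:ℝ) < lam := lt_of_lt_of_le one_pos hlam
  have hdb : ∀ s : ℕ, (Γ.dist (γ s) (δ s) : ℝ) ≤ lam * (‖c‖ + mu) := by
    intro s
    have h1 := hηlower (γ s) (δ s)
    have h2 : dist (η (γ s)) (η (δ s)) = ‖c‖ := by
      rw [show δ s = t • γ s from rfl, hequiv, hc (η (γ s))]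
      exact dist_self_add_right _ _
    rw [h2] at h1
    have h3 : (1 / lam) * (Γ.dist (γ s) (δ s) : ℝ) ≤ ‖c‖ + mu := by linarith
    calc (Γ.dist (γ s) (δ s) : ℝ)
        = lam * ((1 / lam) * (Γ.dist (γ s) (δ s) : ℝ)) := by
          field_simp
      _ ≤ lam * (‖c‖ + mu) :=
          mul_le_mul_of_nonneg_left h3 (le_of_lt hlam0)
  set D : ℕ := ⌈lam * (‖c‖ + mu)⌉₊ with hDdef
  have hDn : ∀ s : ℕ, Γ.dist (γ s) (δ s) ≤ D := by
    intro s
    have := (hdb s).trans (Nat.le_ceil _)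
    exact_mod_cast this
  have hD1 : ∀ s : ℕ, ({w : W | side w (γ s) ≠ side w (δ s)}).ncard ≤ D := by
    intro s; rw [← hdist]; exact hDn s
  have hD2 : ∀ s : ℕ, ({w : W | side w (δ s) ≠ side w (γ s)}).ncard ≤ D := by
    intro s; rw [← hdist, SimpleGraph.dist_comm]; exact hDn s
  have hA : (raysWalls side γ \ raysWalls side δ).Finite :=
    diff_finite hdist hfin γ δ hγ D hD1
  have hB : (raysWalls side δ \ raysWalls side γ).Finite :=
    diff_finite hdist hfin δ γ hδ D hD2
  rw [Set.symmDiff_def]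
  exact hA.union hB
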